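/- Let γ : ℝ → ℝ³ be four times continuously differentiable near a point a with γ''(a) = 0, and set Δ(t) := det(γ'(t), γ''(t), γ'''(t)). Then Δ(a) = 0, Δ'(a) = 0, and Δ''(a) = det(γ'(a), γ'''(a), γ''''(a)). In particular, if t = a is a generic inflection point of γ, the normalized Darboux vector field extends smoothly across a (i.e. the order of torsion at a is at least 3) if and only if det(γ'(a), γ'''(a), γ''''(a)) = 0. -/

import Mathlib

open Real

noncomputable abbrev E3 := EuclideanSpace ℝ (Fin 3)

/-- The cross product of vectors in Euclidean 3-space. -/
noncomputable def cross3 (u v : E3) : E3 :=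
  (WithLp.equiv 2 (Fin 3 → ℝ)).symm
    ![u 1 * v 2 - u 2 * v 1, u 2 * v 0 - u 0 * v 2, u 0 * v 1 - u 1 * v 0]

/-- The dot product of vectors in Euclidean 3-space. -/
noncomputable def dot3 (u v : E3) : ℝ := u 0 * v 0 + u 1 * v 1 + u 2 * v 2

/-- The determinant of the 3×3 matrix with columns `u`, `v`, `w`. -/
noncomputable def det3 (u v w : E3) : ℝ := dot3 u (cross3 v w)

lemma det3_expand (u v w : E3) : det3 u v w =
    u 0 * (v 1 * w 2 - v 2 * w 1) + u 1 * (v 2 * w 0 - v 0 * w 2)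
      + u 2 * (v 0 * w 1 - v 1 * w 0) := by
  simp [det3, dot3, cross3]

lemma det3_self12 (u w : E3) : det3 u u w = 0 := by simp [det3_expand]; ring
lemma det3_self23 (u v : E3) : det3 u v v = 0 := by simp [det3_expand]; ring
lemma det3_zero2 (u w : E3) : det3 u 0 w = 0 := by simp [det3_expand]
lemma det3_smul2 (c : ℝ) (u v w : E3) : det3 u (c • v) w = c * det3 u v w := by
  simp [det3_expand, PiLp.smul_apply, smul_eq_mul]; ring

lemma hasDerivAt_apply3 {f : ℝ → E3} {v : E3} {t : ℝ} (i : Fin 3) (h : HasDerivAt f v t) :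
    HasDerivAt (fun t => f t i) (v i) t :=
  ((EuclideanSpace.proj i).hasFDerivAt.comp_hasDerivAt t h :)

lemma HasDerivAt.det3' {f g h : ℝ → E3} {f' g' h' : E3} {t : ℝ}
    (hf : HasDerivAt f f' t) (hg : HasDerivAt g g' t) (hh : HasDerivAt h h' t) :
    HasDerivAt (fun t => det3 (f t) (g t) (h t))
      (det3 f' (g t) (h t) + det3 (f t) g' (h t) + det3 (f t) (g t) h') t := by
  have f0 := hasDerivAt_apply3 0 hf; have f1 := hasDerivAt_apply3 1 hf
  have f2 := hasDerivAt_apply3 2 hf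
  have g0 := hasDerivAt_apply3 0 hg; have g1 := hasDerivAt_apply3 1 hg
  have g2 := hasDerivAt_apply3 2 hg
  have h0 := hasDerivAt_apply3 0 hh; have h1 := hasDerivAt_apply3 1 hh
  have h2 := hasDerivAt_apply3 2 hh
  simp only [det3_expand]
  have key := ((f0.mul ((g1.mul h2).sub (g2.mul h1))).add
      (f1.mul ((g2.mul h0).sub (g0.mul h2)))).add
      (f2.mul ((g0.mul h1).sub (g1.mul h0)))
  exact key.congr_deriv (by simp only [Pi.mul_apply, Pi.sub_apply]; ring)

lemma continuous_det3 : Continuous (fun p : E3 × E3 × E3 => det3 p.1 p.2.1 p.2.2) := by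
  simp only [det3_expand]
  fun_prop

/-- At a point where γ'' vanishes, the torsion numerator Δ = det(γ',γ'',γ''') satisfies
Δ(a) = Δ'(a) = 0 and Δ''(a) = det(γ'(a), γ'''(a), γ''''(a)). -/
theorem torsion_numerator_derivatives_at_inflection (γ : ℝ → E3) (a : ℝ)
    (hγ : ∃ s ∈ nhds a, ContDiffOn ℝ 4 γ s)
    (hinf : deriv (deriv γ) a = 0) :
    (fun t => det3 (deriv γ t) (deriv (deriv γ) t) (deriv (deriv (deriv γ)) t)) a = 0 ∧
    deriv (fun t => det3 (deriv γ t) (deriv (deriv γ) t) (deriv (deriv (deriv γ)) t)) a = 0 ∧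
    deriv (deriv (fun t => det3 (deriv γ t) (deriv (deriv γ) t) (deriv (deriv (deriv γ)) t))) a
      = det3 (deriv γ a) (deriv (deriv (deriv γ)) a) (deriv (deriv (deriv (deriv γ))) a) := by
  obtain ⟨s, hs, hC⟩ := hγ
  obtain ⟨U, hUs, hUopen, haU⟩ := mem_nhds_iff.mp hs
  have hC' : ContDiffOn ℝ 4 γ U := hC.mono hUs
  set g1 := deriv γ
  set g2 := deriv g1 with hg2
  set g3 := deriv g2 with hg3
  set g4 := deriv g3 with hg4
  have hC1 : ContDiffOn ℝ 3 g1 U := hC'.deriv_of_isOpen hUopen (by norm_num)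
  have hC2 : ContDiffOn ℝ 2 g2 U := hC1.deriv_of_isOpen hUopen (by norm_num)
  have hC3 : ContDiffOn ℝ 1 g3 U := hC2.deriv_of_isOpen hUopen (by norm_num)
  have hC4 : ContDiffOn ℝ 0 g4 U := hC3.deriv_of_isOpen hUopen (by norm_num)
  have hd1 : ∀ t ∈ U, HasDerivAt g1 (g2 t) t := fun t ht =>
    (((hC1.differentiableOn (by norm_num)).differentiableAt (hUopen.mem_nhds ht)).hasDerivAt)
  have hd2 : ∀ t ∈ U, HasDerivAt g2 (g3 t) t := fun t ht =>
    (((hC2.differentiableOn (by norm_num)).differentiableAt (hUopen.mem_nhds ht)).hasDerivAt)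
  have hd3 : ∀ t ∈ U, HasDerivAt g3 (g4 t) t := fun t ht =>
    (((hC3.differentiableOn (by norm_num)).differentiableAt (hUopen.mem_nhds ht)).hasDerivAt)
  have hcont1 : ContinuousAt g1 a :=
    (hC1.continuousOn.continuousAt (hUopen.mem_nhds haU))
  have hcont4 : ContinuousAt g4 a :=
    (hC4.continuousOn.continuousAt (hUopen.mem_nhds haU))
  have key : ∀ t ∈ U, HasDerivAt (fun t => det3 (g1 t) (g2 t) (g3 t))
      (det3 (g1 t) (g2 t) (g4 t)) t := by
    intro t ht
    have h := (hd1 t ht).det3' (hd2 t ht) (hd3 t ht)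
    simpa [det3_self12, det3_self23] using h
  refine ⟨by simp [hinf, det3_zero2], ?_, ?_⟩
  · rw [(key a haU).deriv, hinf, det3_zero2]
  · set G : ℝ → ℝ := fun t => det3 (g1 t) (g2 t) (g4 t) with hG
    have hev : deriv (fun t => det3 (g1 t) (g2 t) (g3 t)) =ᶠ[nhds a] G := by
      filter_upwards [hUopen.mem_nhds haU] with t ht using (key t ht).deriv
    rw [hev.deriv_eq]
    have hslope : slope G a = fun t => det3 (g1 t) (slope g2 a t) (g4 t) := by
      funext t
      simp only [slope, vsub_eq_sub, hG, hinf, sub_zero, det3_smul2, det3_zero2,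
        smul_eq_mul, mul_sub, mul_zero]
    have T1 : Filter.Tendsto g1 (nhdsWithin a {a}ᶜ) (nhds (g1 a)) :=
      hcont1.tendsto.mono_left nhdsWithin_le_nhds
    have T2 : Filter.Tendsto (slope g2 a) (nhdsWithin a {a}ᶜ) (nhds (g3 a)) :=
      hasDerivAt_iff_tendsto_slope.mp (hd2 a haU)
    have T4 : Filter.Tendsto g4 (nhdsWithin a {a}ᶜ) (nhds (g4 a)) :=
      hcont4.tendsto.mono_left nhdsWithin_le_nhds
    have Tall : Filter.Tendsto (fun t => det3 (g1 t) (slope g2 a t) (g4 t))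
        (nhdsWithin a {a}ᶜ) (nhds (det3 (g1 a) (g3 a) (g4 a))) :=
      (continuous_det3.continuousAt.tendsto.comp (T1.prodMk_nhds (T2.prodMk_nhds T4)))
    have hD : HasDerivAt G (det3 (g1 a) (g3 a) (g4 a)) a := by
      rw [hasDerivAt_iff_tendsto_slope, hslope]
      exact Tall
    exact hD.deriv
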